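/- Let t₀ ∈ ℝ, let ϱ ∈ R_c be nondecreasing, let a ≥ 0, let κ, γ : [t₀, ∞) → [0, ∞) be locally integrable Borel functions, and let z : [t₀, ∞) → [0, ∞) be a locally bounded Borel function satisfying z(t) ≤ a + ∫_{t₀}^t ( κ(s) + γ(s) · ϱ(z(s)) ) ds for all t ≥ t₀. Then for every t ≥ t₀ such that ( a + ∫_{t₀}^t κ(s) ds , ∫_{t₀}^t γ(s) ds ) ∈ D_ϱ, it holds that sup_{s ∈ [t₀, t]} z(s) ≤ Ψ_ϱ( a + ∫_{t₀}^t κ(s) ds , ∫_{t₀}^t γ(s) ds ). -/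

import Mathlib

open MeasureTheory Filter Set

/-- `Φ_ρ(w) = ∫_1^w 1/ρ(v) dv` for `ρ ∈ R_c`. -/
noncomputable def Phi (ρ : ℝ → ℝ) (w : ℝ) : ℝ := ∫ v in (1:ℝ)..w, 1 / ρ v

/-- `Φ_ρ(0) = lim_{v↓0} Φ_ρ(v) ∈ [-∞, ∞)`, realised as an infimum in `EReal`. -/
noncomputable def Phi0 (ρ : ℝ → ℝ) : EReal :=
  sInf ((fun u => ((Phi ρ u : ℝ) : EReal)) '' Set.Ioi (0:ℝ))

/-- `Φ_ρ(∞) = lim_{v↑∞} Φ_ρ(v) ∈ (-∞, ∞]`, realised as a supremum in `EReal`. -/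
noncomputable def PhiInfty (ρ : ℝ → ℝ) : EReal :=
  sSup ((fun u => ((Phi ρ u : ℝ) : EReal)) '' Set.Ioi (0:ℝ))

/-- The `EReal`-valued extension of `Φ_ρ` to `[0,∞)`. -/
noncomputable def PhiE (ρ : ℝ → ℝ) (v : ℝ) : EReal :=
  if v = 0 then Phi0 ρ else ((Phi ρ v : ℝ) : EReal)

/-- `D_ρ`, the set of all `(v,w) ∈ [0,∞)²` with `Φ_ρ(v) + w < Φ_ρ(∞)`. -/
def Drho (ρ : ℝ → ℝ) : Set (ℝ × ℝ) :=
  {q | 0 ≤ q.1 ∧ 0 ≤ q.2 ∧ PhiE ρ q.1 + (q.2 : EReal) < PhiInfty ρ}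

/-- `Ψ_ρ(v,w) = Φ_ρ⁻¹(Φ_ρ(v) + w)`, with `Φ_ρ⁻¹` extended by one-sided limits,
realised as `sup {u > 0 | Φ_ρ(u) ≤ Φ_ρ(v) + w}` (with `sup ∅ = 0`). -/
noncomputable def Psi (ρ : ℝ → ℝ) (v w : ℝ) : ℝ :=
  sSup {u : ℝ | 0 < u ∧ ((Phi ρ u : ℝ) : EReal) ≤ PhiE ρ v + (w : EReal)}

section helpers
variable {ϱ : ℝ → ℝ}

lemma my_intInt (hϱc : ContinuousOn ϱ (Set.Ici 0)) (hϱpos : ∀ v > (0:ℝ), 0 < ϱ v)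
    {u v : ℝ} (hu : 0 < u) (hv : 0 < v) :
    IntervalIntegrable (fun x => 1 / ϱ x) volume u v := by
  have hsub : Set.uIcc u v ⊆ Set.Ioi 0 := fun x hx =>
    lt_of_lt_of_le (lt_min hu hv) hx.1
  refine ContinuousOn.intervalIntegrable ?_
  refine ContinuousOn.div continuousOn_const (hϱc.mono (fun x hx => Set.mem_Ici.mpr (show (0:ℝ) < x from hsub hx).le)) ?_
  exact fun x hx => (hϱpos x (hsub hx)).ne'

lemma my_phi_add (hϱc : ContinuousOn ϱ (Set.Ici 0)) (hϱpos : ∀ v > (0:ℝ), 0 < ϱ v)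
    {u v : ℝ} (hu : 0 < u) (hv : 0 < v) :
    Phi ϱ v = Phi ϱ u + ∫ x in u..v, 1 / ϱ x := by
  have h1 : IntervalIntegrable (fun x => 1 / ϱ x) volume 1 u :=
    my_intInt hϱc hϱpos one_pos hu
  have h2 : IntervalIntegrable (fun x => 1 / ϱ x) volume u v :=
    my_intInt hϱc hϱpos hu hv
  rw [Phi, Phi, ← intervalIntegral.integral_add_adjacent_intervals h1 h2]

lemma my_phi_mono (hϱc : ContinuousOn ϱ (Set.Ici 0)) (hϱpos : ∀ v > (0:ℝ), 0 < ϱ v)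
    {u v : ℝ} (hu : 0 < u) (huv : u ≤ v) : Phi ϱ u ≤ Phi ϱ v := by
  have h := my_phi_add hϱc hϱpos (u := u) (v := v) hu (hu.trans_le huv)
  have h0 : 0 ≤ ∫ x in u..v, 1 / ϱ x := by
    apply intervalIntegral.integral_nonneg huv
    intro x hx
    exact le_of_lt (div_pos one_pos (hϱpos x (hu.trans_le hx.1)))
  linarith

lemma my_phi_sub_le (hϱc : ContinuousOn ϱ (Set.Ici 0)) (hϱpos : ∀ v > (0:ℝ), 0 < ϱ v)
    (hϱmono : MonotoneOn ϱ (Set.Ici 0)) {u v : ℝ} (hu : 0 < u) (huv : u ≤ v) :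
    Phi ϱ v - Phi ϱ u ≤ (v - u) / ϱ u := by
  have h := my_phi_add hϱc hϱpos (u := u) (v := v) hu (hu.trans_le huv)
  have h1 : (∫ x in u..v, 1 / ϱ x) ≤ ∫ _x in u..v, 1 / ϱ u := by
    apply intervalIntegral.integral_mono_on huv (my_intInt hϱc hϱpos hu (hu.trans_le huv))
      intervalIntegrable_const
    intro x hx
    apply one_div_le_one_div_of_le (hϱpos u hu)
    exact hϱmono (le_of_lt hu) (le_of_lt (hu.trans_le hx.1)) hx.1
  have h2 : (∫ _x in u..v, 1 / ϱ u) = (v - u) / ϱ u := by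
    rw [intervalIntegral.integral_const, smul_eq_mul, mul_one_div]
  linarith
end helpers

set_option maxHeartbeats 1000000 in
/-- Bihari-type comparison estimate: if `ϱ ∈ R_c` is nondecreasing, `a ≥ 0`, `κ, γ ≥ 0`
are locally integrable, and a locally bounded Borel function `z ≥ 0` satisfies
`z(t) ≤ a + ∫_{t₀}^t (κ(s) + γ(s) ϱ(z(s))) ds` for all `t ≥ t₀`, then for every `t ≥ t₀`
with `(a + ∫_{t₀}^t κ, ∫_{t₀}^t γ) ∈ D_ϱ`,
`sup_{s ∈ [t₀,t]} z(s) ≤ Ψ_ϱ(a + ∫_{t₀}^t κ, ∫_{t₀}^t γ)`. -/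
theorem stmt_10 (t₀ : ℝ) (ϱ : ℝ → ℝ) (hϱc : ContinuousOn ϱ (Set.Ici 0)) (hϱ0 : ϱ 0 = 0)
    (hϱpos : ∀ v > (0:ℝ), 0 < ϱ v) (hϱmono : MonotoneOn ϱ (Set.Ici 0))
    (a : ℝ) (ha : 0 ≤ a) (κ γ z : ℝ → ℝ)
    (hκm : Measurable κ) (hγm : Measurable γ) (hzm : Measurable z)
    (hκ0 : ∀ s, t₀ ≤ s → 0 ≤ κ s) (hγ0 : ∀ s, t₀ ≤ s → 0 ≤ γ s)
    (hz0 : ∀ s, t₀ ≤ s → 0 ≤ z s)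
    (hκint : ∀ t, t₀ ≤ t → IntervalIntegrable κ volume t₀ t)
    (hγint : ∀ t, t₀ ≤ t → IntervalIntegrable γ volume t₀ t)
    (hzb : ∀ t, t₀ ≤ t → BddAbove (z '' Set.Icc t₀ t))
    (hz : ∀ t, t₀ ≤ t → z t ≤ a + ∫ s in t₀..t, (κ s + γ s * ϱ (z s)))
    (t : ℝ) (ht : t₀ ≤ t)
    (hD : ((a + ∫ s in t₀..t, κ s), (∫ s in t₀..t, γ s)) ∈ Drho ϱ) :
    ∀ s ∈ Set.Icc t₀ t,
      z s ≤ Psi ϱ (a + ∫ s in t₀..t, κ s) (∫ s in t₀..t, γ s) := by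
  set V : ℝ := a + ∫ s in t₀..t, κ s with hVdef
  set W : ℝ := ∫ s in t₀..t, γ s with hWdef
  obtain ⟨hV0, hW0, hDlt⟩ : 0 ≤ V ∧ 0 ≤ W ∧ PhiE ϱ V + (W : EReal) < PhiInfty ϱ := hD
  -- the modified ϱ
  set ϱ' : ℝ → ℝ := fun v => ϱ (max v 0) with hϱ'def
  have hϱ'cont : Continuous ϱ' :=
    hϱc.comp_continuous (continuous_id.max continuous_const) (fun x => le_max_right x 0)
  have hϱ'mono : Monotone ϱ' := fun x y hxy =>
    hϱmono (le_max_right x 0) (le_max_right y 0) (max_le_max hxy le_rfl)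
  have hϱ'nonneg : ∀ x, 0 ≤ ϱ' x := by
    intro x
    rcases (le_max_right x 0).lt_or_eq with h | h
    · exact (hϱpos _ h).le
    · simp only [hϱ'def, ← h, hϱ0, le_refl]
  have hϱ'eq : ∀ x, 0 ≤ x → ϱ' x = ϱ x := fun x hx => by
    simp only [hϱ'def, max_eq_left hx]
  have hϱ'pos : ∀ x, 0 < x → 0 < ϱ' x := fun x hx => by
    rw [hϱ'eq x hx.le]; exact hϱpos x hx
  -- the function h
  set h : ℝ → ℝ := fun r => γ r * ϱ' (z r) with hhdef
  have hh0 : ∀ x, t₀ ≤ x → 0 ≤ h x := fun x hx => mul_nonneg (hγ0 x hx) (hϱ'nonneg _)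
  obtain ⟨M, hM⟩ := hzb t ht
  have hzleM : ∀ r ∈ Icc t₀ t, z r ≤ M := fun r hr => hM ⟨r, hr, rfl⟩
  have hhm : Measurable h := hγm.mul (hϱ'cont.measurable.comp hzm)
  have hhint : IntervalIntegrable h volume t₀ t := by
    apply IntervalIntegrable.mono_fun ((hγint t ht).const_mul (ϱ' M))
      hhm.aestronglyMeasurable
    refine (ae_restrict_mem measurableSet_uIoc).mono (fun x hx => ?_)
    rw [Set.uIoc_of_le ht] at hx
    have hx0 : t₀ ≤ x := hx.1.le
    have h1 : ϱ' (z x) ≤ ϱ' M := hϱ'mono (hzleM x ⟨hx0, hx.2⟩)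
    simp only [hhdef, Real.norm_eq_abs]
    rw [abs_of_nonneg (mul_nonneg (hγ0 x hx0) (hϱ'nonneg _)),
      abs_of_nonneg (mul_nonneg (hϱ'nonneg M) (hγ0 x hx0))]
    rw [mul_comm (ϱ' M) (γ x)]
    exact mul_le_mul_of_nonneg_left h1 (hγ0 x hx0)
  -- subinterval integrability
  have hsubint : ∀ (f : ℝ → ℝ), IntervalIntegrable f volume t₀ t →
      ∀ r1 ∈ Icc t₀ t, ∀ r2 ∈ Icc t₀ t, IntervalIntegrable f volume r1 r2 := by
    intro f hf r1 h1 r2 h2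
    refine hf.mono_set (Set.uIcc_subset_uIcc ?_ ?_) <;>
      rw [Set.uIcc_of_le ht] <;> assumption
  have hκsub := hsubint κ (hκint t ht)
  have hγsub := hsubint γ (hγint t ht)
  have hhsub := hsubint h hhint
  -- nonneg integrals
  have hintnn : ∀ (f : ℝ → ℝ), (∀ x, t₀ ≤ x → 0 ≤ f x) →
      ∀ r1 r2 : ℝ, t₀ ≤ r1 → r1 ≤ r2 → 0 ≤ ∫ x in r1..r2, f x := fun f hf r1 r2 h1 h12 =>
    intervalIntegral.integral_nonneg h12 (fun x hx => hf x (h1.trans hx.1))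
  -- z r ≤ V + ∫ h
  have hzle : ∀ r ∈ Icc t₀ t, z r ≤ V + ∫ x in t₀..r, h x := by
    intro r hr
    have h1 := hz r hr.1
    have hcongr : (∫ x in t₀..r, (κ x + γ x * ϱ (z x))) = ∫ x in t₀..r, (κ x + h x) := by
      apply intervalIntegral.integral_congr
      intro x hx
      rw [Set.uIcc_of_le hr.1] at hx
      simp only [hhdef, hϱ'eq (z x) (hz0 x hx.1)]
    have hsplit : (∫ x in t₀..r, (κ x + h x)) =
        (∫ x in t₀..r, κ x) + ∫ x in t₀..r, h x :=
      intervalIntegral.integral_add (hκsub t₀ ⟨le_refl _, ht⟩ r hr)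
        (hhsub t₀ ⟨le_refl _, ht⟩ r hr)
    have hκle : (∫ x in t₀..r, κ x) ≤ ∫ x in t₀..t, κ x := by
      have hadd := intervalIntegral.integral_add_adjacent_intervals
        (hκsub t₀ ⟨le_refl _, ht⟩ r hr) (hκsub r hr t ⟨ht, le_refl _⟩)
      have hnn := hintnn κ hκ0 r t hr.1 hr.2
      linarith
    rw [hcongr, hsplit] at h1
    simp only [hVdef]
    linarith
  -- KEY ESTIMATE
  have key : ∀ ε > (0:ℝ), ∀ s ∈ Icc t₀ t, 0 < z s → Phi ϱ (z s) ≤ Phi ϱ (V + ε) + W := by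
    intro ε hε s hs hzs
    set c : ℝ := V + ε with hcdef
    have hc : 0 < c := by simp only [hcdef]; linarith
    set G : ℝ → ℝ := fun r => c + ∫ x in t₀..r, h x with hGdef
    have hGdiff : ∀ r1 ∈ Icc t₀ t, ∀ r2 ∈ Icc t₀ t, G r2 - G r1 = ∫ x in r1..r2, h x := by
      intro r1 h1 r2 h2
      have := intervalIntegral.integral_add_adjacent_intervals
        (hhsub t₀ ⟨le_refl _, ht⟩ r1 h1) (hhsub r1 h1 r2 h2)
      simp only [hGdef]; linarith
    have hGmono : ∀ r1 ∈ Icc t₀ t, ∀ r2 ∈ Icc t₀ t, r1 ≤ r2 → G r1 ≤ G r2 := by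
      intro r1 h1 r2 h2 h12
      have e1 := hGdiff r1 h1 r2 h2
      have e2 := hintnn h hh0 r1 r2 h1.1 h12
      linarith
    have hGt₀ : G t₀ = c := by simp [hGdef]
    have hGc : ∀ r ∈ Icc t₀ t, c ≤ G r := by
      intro r hr
      have := hGmono t₀ ⟨le_refl _, ht⟩ r hr hr.1
      rw [hGt₀] at this; exact this
    have hGpos : ∀ r ∈ Icc t₀ t, 0 < G r := fun r hr => hc.trans_le (hGc r hr)
    have hGz : ∀ r ∈ Icc t₀ t, z r ≤ G r := by
      intro r hr
      refine (hzle r hr).trans ?_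
      simp only [hGdef, hcdef]; linarith
    have hGcont : ContinuousOn G (Icc t₀ t) := by
      have hprim := intervalIntegral.continuousOn_primitive_interval'
        hhint (left_mem_uIcc (a := t₀) (b := t))
      rw [Set.uIcc_of_le ht] at hprim
      exact continuousOn_const.add hprim
    have hcomp : ContinuousOn (fun r => ϱ' (G r)) (Icc t₀ t) := hϱ'cont.comp_continuousOn hGcont
    have hUC := isCompact_Icc.uniformContinuousOn_of_continuous hcomp
    have hϱ'c : 0 < ϱ' c := hϱ'pos c hc
    have hmain : ∀ δ > (0:ℝ), Phi ϱ (G s) ≤ Phi ϱ c + (1 + δ) * ∫ x in t₀..s, γ x := by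
      intro δ hδ
      obtain ⟨η, hη, hUCη⟩ := Metric.uniformContinuousOn_iff.mp hUC (δ * ϱ' c) (mul_pos hδ hϱ'c)
      obtain ⟨n, hn⟩ := exists_nat_gt ((t - t₀)/η)
      have hn0 : 0 < (n:ℝ) := lt_of_le_of_lt (div_nonneg (by linarith) hη.le) hn
      set d : ℝ := (s - t₀)/n with hddef
      have hd0 : 0 ≤ d := div_nonneg (by linarith [hs.1]) hn0.le
      have hdη : d < η := by
        have h1 : d ≤ (t - t₀)/n := by
          rw [hddef]
          exact (div_le_div_iff_of_pos_right hn0).mpr (by linarith [hs.2])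
        have h2 : (t - t₀)/n < η := by
          rw [div_lt_iff₀ hn0]
          rw [div_lt_iff₀ hη] at hn
          linarith
        linarith
      set p : ℕ → ℝ := fun i => t₀ + i * d with hpdef
      have hp0 : p 0 = t₀ := by simp [hpdef]
      have hpn : p n = s := by
        simp only [hpdef, hddef]; field_simp; ring
      have hpsucc : ∀ i : ℕ, p (i+1) - p i = d := by
        intro i; simp only [hpdef]; push_cast; ring
      have hpmem : ∀ i ≤ n, p i ∈ Icc t₀ t := by
        intro i hi
        have hi' : (i:ℝ) ≤ n := Nat.cast_le.mpr hi
        have hi0 : (0:ℝ) ≤ i := Nat.cast_nonneg i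
        constructor
        · simp only [hpdef]; nlinarith
        · have hle : p i ≤ p n := by simp only [hpdef]; nlinarith
          rw [hpn] at hle; exact hle.trans hs.2
      have hple : ∀ i : ℕ, p i ≤ p (i+1) := fun i => by have := hpsucc i; linarith
      have piece : ∀ i ∈ Finset.range n, Phi ϱ (G (p (i+1))) - Phi ϱ (G (p i)) ≤
          (1 + δ) * ∫ x in p i..p (i+1), γ x := by
        intro i hi
        have hin : i ≤ n := (Finset.mem_range.mp hi).le
        have hin1 : i + 1 ≤ n := Finset.mem_range.mp hi
        have hmi := hpmem i hin
        have hmi1 := hpmem (i+1) hin1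
        set A := G (p i) with hA
        set Bv := G (p (i+1)) with hB
        have hA0 : 0 < A := hGpos _ hmi
        have hAB : A ≤ Bv := hGmono _ hmi _ hmi1 (hple i)
        have hcA : ϱ' c ≤ ϱ' A := hϱ'mono (hGc _ hmi)
        have hϱ'A : 0 < ϱ' A := lt_of_lt_of_le hϱ'c hcA
        have hϱA : ϱ A = ϱ' A := (hϱ'eq A hA0.le).symm
        have step1 : Phi ϱ Bv - Phi ϱ A ≤ (Bv - A) / ϱ A :=
          my_phi_sub_le hϱc hϱpos hϱmono hA0 hAB
        have step2 : Bv - A = ∫ x in p i..p (i+1), h x := hGdiff _ hmi _ hmi1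
        have hI0 : 0 ≤ ∫ x in p i..p (i+1), γ x := hintnn γ hγ0 _ _ hmi.1 (hple i)
        have step3 : (∫ x in p i..p (i+1), h x) ≤ ϱ' Bv * ∫ x in p i..p (i+1), γ x := by
          rw [← intervalIntegral.integral_const_mul]
          apply intervalIntegral.integral_mono_on (hple i) (hhsub _ hmi _ hmi1)
            ((hγsub _ hmi _ hmi1).const_mul _)
          intro x hx
          have hxm : x ∈ Icc t₀ t := ⟨hmi.1.trans hx.1, hx.2.trans hmi1.2⟩
          have h1 : z x ≤ Bv := (hGz x hxm).trans (hGmono x hxm _ hmi1 hx.2)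
          have h2 : ϱ' (z x) ≤ ϱ' Bv := hϱ'mono h1
          simp only [hhdef]
          rw [mul_comm (ϱ' Bv)]
          exact mul_le_mul_of_nonneg_left h2 (hγ0 x hxm.1)
        have step4 : ϱ' Bv ≤ ϱ' A + δ * ϱ' c := by
          have hd1 : dist (p (i+1)) (p i) < η := by
            rw [Real.dist_eq, hpsucc i, abs_of_nonneg hd0]; exact hdη
          have hd2 := hUCη (p (i+1)) hmi1 (p i) hmi hd1
          rw [Real.dist_eq] at hd2
          have := le_of_lt (lt_of_le_of_lt (le_abs_self _) hd2)
          simp only [hA, hB] at *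
          linarith
        calc Phi ϱ Bv - Phi ϱ A ≤ (Bv - A) / ϱ A := step1
          _ = (∫ x in p i..p (i+1), h x) / ϱ' A := by rw [step2, hϱA]
          _ ≤ (ϱ' Bv * ∫ x in p i..p (i+1), γ x) / ϱ' A := by
              exact (div_le_div_iff_of_pos_right hϱ'A).mpr step3
          _ ≤ (1 + δ) * ∫ x in p i..p (i+1), γ x := by
              rw [div_le_iff₀ hϱ'A]
              have k1 := mul_le_mul_of_nonneg_right step4 hI0
              have k2 := mul_le_mul_of_nonneg_right
                (mul_le_mul_of_nonneg_left hcA hδ.le) hI0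
              nlinarith [k1, k2]
      have tel : Phi ϱ (G s) - Phi ϱ c =
          ∑ i ∈ Finset.range n, (Phi ϱ (G (p (i+1))) - Phi ϱ (G (p i))) := by
        rw [Finset.sum_range_sub (fun i => Phi ϱ (G (p i)))]
        rw [hp0, hpn, hGt₀]
      have hsum : ∑ i ∈ Finset.range n, ∫ x in p i..p (i+1), γ x = ∫ x in t₀..s, γ x := by
        have hadj := intervalIntegral.sum_integral_adjacent_intervals
          (a := p) (n := n) (f := γ) (fun i hi => hγsub _ (hpmem i hi.le) _ (hpmem (i+1) hi))
        rw [hp0, hpn] at hadj; exact hadj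
      have hsle := Finset.sum_le_sum piece
      rw [← tel, ← Finset.mul_sum, hsum] at hsle
      linarith
    have hγsle : (∫ x in t₀..s, γ x) ≤ W := by
      have hadd := intervalIntegral.integral_add_adjacent_intervals
        (hγsub t₀ ⟨le_refl _, ht⟩ s hs) (hγsub s hs t ⟨ht, le_refl _⟩)
      have hnn := hintnn γ hγ0 s t hs.1 hs.2
      simp only [hWdef]; linarith
    have hγs0 : 0 ≤ ∫ x in t₀..s, γ x := hintnn γ hγ0 t₀ s (le_refl _) hs.1
    have hPhiGs : Phi ϱ (G s) ≤ Phi ϱ c + W := by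
      apply le_of_forall_pos_le_add
      intro ε' hε'
      have hq : 0 < ε' / (W + 1) := div_pos hε' (by linarith)
      have hm := hmain _ hq
      have hqW : ε' / (W + 1) * (W + 1) = ε' := by field_simp
      nlinarith [hq.le, hγs0, hγsle]
    have hmono := my_phi_mono hϱc hϱpos hzs (hGz s hs)
    simp only [hcdef] at hPhiGs
    linarith
  -- CONCLUSION
  intro s hs
  set L : EReal := PhiE ϱ V + (W : EReal) with hLdef
  set S : Set ℝ := {u : ℝ | 0 < u ∧ ((Phi ϱ u : ℝ) : EReal) ≤ L} with hSdef
  have hPsiS : Psi ϱ V W = sSup S := rfl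
  have hbdd : BddAbove S := by
    by_contra hb
    have hle : PhiInfty ϱ ≤ L := by
      apply sSup_le
      rintro x ⟨u, hu, rfl⟩
      obtain ⟨u', hu'S, huu'⟩ := not_bddAbove_iff.mp hb u
      have hcast : ((Phi ϱ u : ℝ) : EReal) ≤ ((Phi ϱ u' : ℝ) : EReal) := by
        exact_mod_cast my_phi_mono hϱc hϱpos hu huu'.le
      exact le_trans hcast hu'S.2
    exact absurd hDlt (not_lt.mpr hle)
  rcases lt_or_ge 0 (z s) with hzs | hzs
  · have hmemL : ((Phi ϱ (z s) : ℝ) : EReal) ≤ L := by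
      by_cases hV' : V = 0
      · have h1 : ((Phi ϱ (z s) - W : ℝ) : EReal) ≤ Phi0 ϱ := by
          apply le_sInf
          rintro x ⟨u, hu, rfl⟩
          have hk := key u hu s hs hzs
          rw [hV', zero_add] at hk
          show ((Phi ϱ (z s) - W : ℝ) : EReal) ≤ ((Phi ϱ u : ℝ) : EReal)
          exact_mod_cast (by linarith : Phi ϱ (z s) - W ≤ Phi ϱ u)
        have h2 : ((Phi ϱ (z s) : ℝ) : EReal) = ((Phi ϱ (z s) - W : ℝ) : EReal) + (W : EReal) := by
          rw [← EReal.coe_add]; norm_num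
        rw [h2, hLdef]
        simp only [PhiE, if_pos hV']
        exact add_le_add_left h1 _
      · have hVpos : 0 < V := hV0.lt_of_ne (Ne.symm hV')
        have hϱV : 0 < ϱ V := hϱpos V hVpos
        have hreal : Phi ϱ (z s) ≤ Phi ϱ V + W := by
          apply le_of_forall_pos_le_add
          intro ε hε
          have hk := key (ε * ϱ V) (mul_pos hε hϱV) s hs hzs
          have hsub := my_phi_sub_le hϱc hϱpos hϱmono hVpos
            (le_add_of_nonneg_right (mul_pos hε hϱV).le)
          have heq : (V + ε * ϱ V - V) / ϱ V = ε := by field_simp; ring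
          rw [heq] at hsub
          linarith
        rw [hLdef]
        simp only [PhiE, if_neg hV']
        rw [← EReal.coe_add]
        exact_mod_cast hreal
    rw [hPsiS]
    exact le_csSup hbdd ⟨hzs, hmemL⟩
  · have h0 : z s ≤ 0 := hzs
    rw [hPsiS]
    refine le_trans h0 (Real.sSup_nonneg (fun x hx => hx.1.le))
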